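/- Let (f_j) be a sequence of lower semicontinuous convex functions on a compact convex set K in a finite-dimensional vector space, with values in ℝ ∪ {∞}, converging pointwise on the interior of K to a lower semicontinuous convex function f that is finite on the interior of K. Then inf_K f_j → inf_K f. Moreover, if each f_j attains its infimum at x_j and x is a limit point of (x_j), then f attains its infimum at x. -/

import Mathlib

open Filter Topology
/-- Convexity for an `EReal`-valued function on a set. -/
def ERealConvexOn {n : ℕ} (K : Set (EuclideanSpace ℝ (Fin n)))
    (f : EuclideanSpace ℝ (Fin n) → EReal) : Prop :=
  ∀ x ∈ K, ∀ y ∈ K, ∀ a b : ℝ, 0 ≤ a → 0 ≤ b → a + b = 1 →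
    f (a • x + b • y) ≤ (a : EReal) * f x + (b : EReal) * f y

variable {n : ℕ}



lemma sublevel_convex {K : Set (EuclideanSpace ℝ (Fin n))} (hK : Convex ℝ K)
    {f : EuclideanSpace ℝ (Fin n) → EReal} (hf : ERealConvexOn K f) (M : ℝ) :
    Convex ℝ {z | z ∈ K ∧ f z ≤ (M : EReal)} := by
  intro x hx y hy a b ha hb hab
  refine ⟨hK hx.1 hy.1 ha hb hab, ?_⟩
  calc f (a • x + b • y) ≤ (a : EReal) * f x + (b : EReal) * f y :=
        hf x hx.1 y hy.1 a b ha hb hab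
    _ ≤ (a : EReal) * (M : EReal) + (b : EReal) * (M : EReal) := by
        refine add_le_add ?_ ?_
        · exact mul_le_mul_of_nonneg_left hx.2 (by exact_mod_cast ha)
        · exact mul_le_mul_of_nonneg_left hy.2 (by exact_mod_cast hb)
    _ = (M : EReal) := by
        rw [← EReal.coe_mul, ← EReal.coe_mul, ← EReal.coe_add]
        norm_cast
        linear_combination M * hab


noncomputable def vtx (p : EuclideanSpace ℝ (Fin n)) (R : ℝ) :
    Option (Fin n × Bool) → EuclideanSpace ℝ (Fin n)
  | none => p
  | some (i, b) => p + (if b then R else -R) • EuclideanSpace.single i (1:ℝ)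

lemma vtx_mem_ball {p : EuclideanSpace ℝ (Fin n)} {R : ℝ} (hR : 0 < R)
    (o : Option (Fin n × Bool)) : vtx p R o ∈ Metric.closedBall p R := by
  match o with
  | none => simpa [vtx] using hR.le
  | some (i, b) =>
    simp only [vtx, Metric.mem_closedBall, dist_eq_norm, add_sub_cancel_left]
    rw [norm_smul, EuclideanSpace.norm_single]
    cases b <;> simp [abs_of_pos hR]

lemma abs_coord_le_norm (z : EuclideanSpace ℝ (Fin n)) (i : Fin n) : |z i| ≤ ‖z‖ := by
  rw [EuclideanSpace.norm_eq]
  have h1 : |z i| = Real.sqrt (‖z i‖^2) := by rw [Real.sqrt_sq_eq_abs]; simp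
  rw [h1]
  apply Real.sqrt_le_sqrt
  exact Finset.single_le_sum (f := fun j => ‖z j‖^2) (fun j _ => by positivity) (Finset.mem_univ i)

lemma repr_sum (p z : EuclideanSpace ℝ (Fin n)) :
    z = p + ∑ i, (z i - p i) • EuclideanSpace.single i (1:ℝ) := by
  ext j
  have hs : (∑ i, (z i - p i) • EuclideanSpace.single i (1:ℝ)) j
      = ∑ i, (z i - p i) * (EuclideanSpace.single i (1:ℝ) j) :=
    by rw [WithLp.ofLp_sum, Finset.sum_apply]; rfl
  show z j = p j + (∑ i, (z i - p i) • EuclideanSpace.single i (1:ℝ)) j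
  rw [hs]
  simp [EuclideanSpace.single_apply]

lemma max_add_max_neg (a : ℝ) : max a 0 + max (-a) 0 = |a| := by
  rcases le_or_gt a 0 with hc | hc
  · rw [max_eq_right hc, max_eq_left (by linarith), abs_of_nonpos hc, zero_add]
  · rw [max_eq_left hc.le, max_eq_right (by linarith), abs_of_pos hc, add_zero]

/-- Points of a small ball around `p` lie in any convex set containing the `vtx` points. -/
lemma ball_subset_convex {S : Set (EuclideanSpace ℝ (Fin n))} (hS : Convex ℝ S)
    {p : EuclideanSpace ℝ (Fin n)} {R : ℝ} (hR : 0 < R)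
    (hvtx : ∀ o, vtx p R o ∈ S) :
    ∀ z ∈ Metric.closedBall p (R / (n + 1)), z ∈ S := by
  intro z hz
  set t : Fin n → ℝ := fun i => z i - p i with ht
  have htle : ∀ i, |t i| ≤ R / (n+1) := by
    intro i
    have h2 := abs_coord_le_norm (z - p) i
    simp only [PiLp.sub_apply] at h2
    calc |t i| ≤ ‖z - p‖ := h2
      _ ≤ R / (n+1) := by simpa [dist_eq_norm] using hz
  have hsumt : ∑ i, |t i| ≤ R := by
    calc ∑ i, |t i| ≤ ∑ _i : Fin n, R / (n+1) := Finset.sum_le_sum fun i _ => htle i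
      _ = n * (R / (n+1)) := by simp [mul_comm]
      _ ≤ R := by
          have hn : (0:ℝ) < n + 1 := by positivity
          rw [mul_div_assoc', div_le_iff₀ hn]
          nlinarith [hR.le]
  set w : Option (Fin n × Bool) → ℝ := fun o =>
    match o with
    | none => 1 - (∑ i, |t i|) / R
    | some (i, b) => (if b then max (t i) 0 else max (-(t i)) 0) / R with hw
  have hwsome : ∀ i b, w (some (i,b)) = (if b then max (t i) 0 else max (-(t i)) 0) / R :=
    fun i b => rfl
  have hwnonneg : ∀ o ∈ (Finset.univ : Finset (Option (Fin n × Bool))), 0 ≤ w o := by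
    rintro (_ | ⟨i, b⟩) -
    · show 0 ≤ 1 - (∑ i, |t i|) / R
      have : (∑ i, |t i|) / R ≤ 1 := by rw [div_le_one hR]; exact hsumt
      linarith
    · rw [hwsome]; cases b
      · rw [if_neg (by simp)]; positivity
      · rw [if_pos rfl]; positivity
  have hsome_sum : ∑ o : Fin n × Bool, w (some o) = (∑ i, |t i|) / R := by
    rw [Fintype.sum_prod_type, Finset.sum_div]
    refine Finset.sum_congr rfl fun i _ => ?_
    rw [Fintype.sum_bool, hwsome, hwsome, if_pos rfl, if_neg (by simp)]
    rw [← add_div, max_add_max_neg]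
  have hwsum : ∑ o, w o = 1 := by
    rw [Fintype.sum_option, hsome_sum]
    show 1 - (∑ i, |t i|) / R + (∑ i, |t i|) / R = 1
    ring
  have hzsum : ∑ o, w o • vtx p R o = z := by
    rw [Fintype.sum_option]
    have hexpand : ∀ o : Fin n × Bool, w (some o) • vtx p R (some o)
        = w (some o) • p + (w (some o) * (if o.2 then R else -R)) • EuclideanSpace.single o.1 (1:ℝ) := by
      rintro ⟨i, b⟩
      show w (some (i,b)) • (p + _) = _
      rw [smul_add, smul_smul]
    rw [Finset.sum_congr rfl fun o _ => hexpand o, Finset.sum_add_distrib]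
    have h1 : (w none • vtx p R none + ∑ o : Fin n × Bool, w (some o) • p)
        = (w none + ∑ o : Fin n × Bool, w (some o)) • p := by
      show w none • p + _ = _
      rw [add_smul, Finset.sum_smul]
    have h2 : ∑ o : Fin n × Bool, (w (some o) * (if o.2 then R else -R)) • EuclideanSpace.single o.1 (1:ℝ)
        = ∑ i, t i • EuclideanSpace.single i (1:ℝ) := by
      rw [Fintype.sum_prod_type]
      refine Finset.sum_congr rfl fun i _ => ?_
      rw [Fintype.sum_bool]
      rw [hwsome, hwsome]
      show ((t i ⊔ 0)/R * R) • EuclideanSpace.single i (1:ℝ)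
          + ((-(t i) ⊔ 0)/R * (-R)) • EuclideanSpace.single i (1:ℝ)
          = t i • EuclideanSpace.single i (1:ℝ)
      rw [← add_smul]
      congr 1
      rw [div_mul_cancel₀ _ hR.ne', mul_neg, div_mul_cancel₀ _ hR.ne']
      linarith [max_zero_sub_max_neg_zero_eq_self (t i)]
    rw [← add_assoc, h1, h2]
    have : w none + ∑ o : Fin n × Bool, w (some o) = 1 := by
      rw [← Fintype.sum_option]; exact hwsum
    rw [this, one_smul]
    exact (repr_sum p z).symm
  have := hS.sum_mem hwnonneg hwsum (fun o _ => hvtx o)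
  rwa [hzsum] at this



/-- Key estimate: value at a point of a small ball is controlled by the value at any
point of `K` plus the sup bound `M` on the double ball. -/
lemma key_est {K : Set (EuclideanSpace ℝ (Fin n))}
    {g : EuclideanSpace ℝ (Fin n) → EReal} (hg : ERealConvexOn K g)
    (hgbot : ∀ u ∈ K, g u ≠ ⊥)
    {p : EuclideanSpace ℝ (Fin n)} {r M : ℝ} (hr : 0 < r)
    (hball : Metric.closedBall p (2*r) ⊆ K)
    (hM : ∀ u ∈ Metric.closedBall p (2*r), g u ≤ (M : EReal))
    {a b : EuclideanSpace ℝ (Fin n)} (ha : a ∈ Metric.closedBall p r) (hb : b ∈ K) :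
    g a ≤ ((1 - dist a b / (dist a b + r) : ℝ) : EReal) * g b
      + ((dist a b / (dist a b + r) : ℝ) : EReal) * (M : EReal) := by
  set d : ℝ := dist a b with hd
  have hd0 : 0 ≤ d := dist_nonneg
  have hdr : 0 < d + r := by linarith
  set s : ℝ := d / (d + r) with hs
  have hs0 : 0 ≤ s := by positivity
  have haK : a ∈ K := hball (Metric.closedBall_subset_closedBall (by linarith) ha)
  rcases eq_or_lt_of_le hd0 with hdz | hdz
  · -- d = 0 : a = b
    have hab : a = b := dist_eq_zero.1 (by rw [← hd, ← hdz])
    have hs' : s = 0 := by rw [hs, ← hdz]; simp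
    rw [hab, hs']
    simp only [sub_zero, EReal.coe_one, one_mul, EReal.coe_zero, zero_mul, add_zero, le_refl]
  · set u : EuclideanSpace ℝ (Fin n) := a + (r / d) • (a - b) with hu
    have hu_dist : dist u a = r := by
      rw [dist_eq_norm, hu]
      simp only [add_sub_cancel_left]
      rw [norm_smul, Real.norm_eq_abs, abs_of_pos (by positivity)]
      rw [← dist_eq_norm, ← hd]
      field_simp
    have huball : u ∈ Metric.closedBall p (2*r) := by
      have h1 : dist u p ≤ dist u a + dist a p := dist_triangle u a p
      have h2 : dist a p ≤ r := ha
      simp only [Metric.mem_closedBall]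
      rw [hu_dist] at h1
      linarith
    have huK : u ∈ K := hball huball
    have hdne : d ≠ 0 := ne_of_gt hdz
    have hdrne : d + r ≠ 0 := ne_of_gt hdr
    have hcombo : (1 - s) • b + s • u = a := by
      rw [hu, hs]
      match_scalars <;> (field_simp; try ring)
    have h1s : (0:ℝ) ≤ 1 - s := by
      rw [hs, sub_nonneg, div_le_one hdr]; linarith
    have := hg b hb u huK (1 - s) s h1s hs0 (by ring)
    rw [hcombo] at this
    refine this.trans ?_
    exact add_le_add le_rfl (mul_le_mul_of_nonneg_left (hM u huball) (by exact_mod_cast hs0 : (0:EReal) ≤ ((s:ℝ):EReal)))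
lemma eventual_ball_bound {K : Set (EuclideanSpace ℝ (Fin n))} (hKconv : Convex ℝ K)
    {f : ℕ → EuclideanSpace ℝ (Fin n) → EReal} {flim : EuclideanSpace ℝ (Fin n) → EReal}
    (hconv : ∀ j, ERealConvexOn K (f j)) (hlimconv : ERealConvexOn K flim)
    (hlimnotbot : ∀ x ∈ K, flim x ≠ ⊥) (hlimfin : ∀ x ∈ interior K, flim x ≠ ⊤)
    (hptwise : ∀ x ∈ interior K, Filter.Tendsto (fun j => f j x) Filter.atTop (𝓝 (flim x)))
    {p : EuclideanSpace ℝ (Fin n)} (hp : p ∈ interior K) :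
    ∃ r : ℝ, 0 < r ∧ ∃ M : ℝ,
      Metric.closedBall p (2*r) ⊆ interior K ∧
      (∀ z ∈ Metric.closedBall p (2*r), flim z ≤ (M:EReal)) ∧
      (∀ᶠ j in Filter.atTop, ∀ z ∈ Metric.closedBall p (2*r), f j z ≤ (M:EReal)) := by
  obtain ⟨ε, hε, hball⟩ := Metric.isOpen_iff.1 isOpen_interior p hp
  set R : ℝ := ε / 2 with hR
  have hR0 : 0 < R := by positivity
  have hRball : Metric.closedBall p R ⊆ interior K :=
    (Metric.closedBall_subset_ball (by rw [hR]; linarith)).trans hball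
  have hvint : ∀ o, vtx p R o ∈ interior K := fun o => hRball (vtx_mem_ball hR0 o)
  have hvreal : ∀ o : Option (Fin n × Bool), flim (vtx p R o) = ((flim (vtx p R o)).toReal : EReal) :=
    fun o => (EReal.coe_toReal (hlimfin _ (hvint o)) (hlimnotbot _ (interior_subset (hvint o)))).symm
  set M₀ : ℝ := Finset.univ.sup' ⟨none, Finset.mem_univ none⟩ (fun o => (flim (vtx p R o)).toReal)
    with hM₀
  set M : ℝ := M₀ + 1 with hM
  have hcM : ∀ o, (flim (vtx p R o)).toReal ≤ M₀ := fun o => by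
    rw [hM₀]; exact Finset.le_sup' (fun o => (flim (vtx p R o)).toReal) (Finset.mem_univ o)
  have hflimv : ∀ o, flim (vtx p R o) ≤ (M : EReal) := by
    intro o
    rw [hvreal o]
    exact_mod_cast le_trans (hcM o) (by rw [hM]; linarith)
  have hevv : ∀ᶠ j in Filter.atTop, ∀ o, f j (vtx p R o) ≤ (M : EReal) := by
    rw [Filter.eventually_all]
    intro o
    have ht := hptwise _ (hvint o)
    have hlt : flim (vtx p R o) < (M : EReal) := by
      rw [hvreal o]
      exact_mod_cast lt_of_le_of_lt (hcM o) (by rw [hM]; linarith)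
    exact (ht.eventually_lt_const hlt).mono fun j hj => hj.le
  refine ⟨R / (2*(n+1)), by positivity, M, ?_, ?_, ?_⟩
  · refine (Metric.closedBall_subset_closedBall ?_).trans hRball
    have h2r : 2 * (R / (2*((n:ℝ)+1))) = R / ((n:ℝ)+1) := by field_simp
    rw [h2r]
    exact div_le_self hR0.le (by norm_num)
  · intro z hz
    have h2r : 2 * (R / (2*(n+1))) = R / (n+1) := by field_simp
    rw [h2r] at hz
    have := ball_subset_convex (sublevel_convex hKconv hlimconv M) hR0
      (fun o => ⟨interior_subset (hvint o), hflimv o⟩) z hz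
    exact this.2
  · refine hevv.mono fun j hj z hz => ?_
    have h2r : 2 * (R / (2*(n+1))) = R / (n+1) := by field_simp
    rw [h2r] at hz
    have := ball_subset_convex (sublevel_convex hKconv (hconv j) M) hR0
      (fun o => ⟨interior_subset (hvint o), hj o⟩) z hz
    exact this.2
lemma flim_global_lower_bound {K : Set (EuclideanSpace ℝ (Fin n))}
    (hKcpt : IsCompact K) {flim : EuclideanSpace ℝ (Fin n) → EReal}
    (hlimconv : ERealConvexOn K flim)
    (hlimnotbot : ∀ x ∈ K, flim x ≠ ⊥)
    {x₀ : EuclideanSpace ℝ (Fin n)} (hx₀ : x₀ ∈ interior K)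
    {r M : ℝ} (hr : 0 < r) (hball : Metric.closedBall x₀ (2*r) ⊆ K)
    (hM : ∀ z ∈ Metric.closedBall x₀ (2*r), flim z ≤ (M:EReal)) :
    ∃ L : ℝ, ∀ b ∈ K, (L : EReal) ≤ flim b := by
  have hx₀K : x₀ ∈ K := interior_subset hx₀
  have hAex : flim x₀ = ((flim x₀).toReal : EReal) := by
    refine (EReal.coe_toReal ?_ (hlimnotbot _ hx₀K)).symm
    intro htop
    have := hM x₀ (Metric.mem_closedBall_self (by positivity))
    rw [htop] at this
    exact (not_le.2 (EReal.coe_lt_top M) this)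
  set A : ℝ := (flim x₀).toReal with hA
  obtain ⟨D₀, hD₀⟩ := hKcpt.isBounded.subset_closedBall x₀
  set D : ℝ := max D₀ 0 with hDdef
  have hD : K ⊆ Metric.closedBall x₀ D :=
    hD₀.trans (Metric.closedBall_subset_closedBall (le_max_left _ _))
  have hD0 : 0 ≤ D := le_max_right _ _
  refine ⟨min 0 (((A - |M|) * (D + r)) / r), fun b hb => ?_⟩
  set L : ℝ := min 0 (((A - |M|) * (D + r)) / r) with hL
  by_cases hbt : flim b = ⊤
  · rw [hbt]; exact le_top
  · have hfb : flim b = (((flim b).toReal : ℝ) : EReal) :=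
      (EReal.coe_toReal hbt (hlimnotbot b hb)).symm
    set c : ℝ := (flim b).toReal with hcdef
    rw [hfb]
    set d : ℝ := dist x₀ b with hd
    have hd0 : 0 ≤ d := dist_nonneg
    have hdD : d ≤ D := by
      rw [hd, dist_comm]; exact Metric.mem_closedBall.1 (hD hb)
    have hdr : 0 < d + r := by linarith
    have hkey := key_est hlimconv hlimnotbot hr hball hM
      (Metric.mem_closedBall_self hr.le) hb
    rw [hfb, hAex] at hkey
    have hreal : A ≤ (1 - d/(d+r)) * c + (d/(d+r)) * M := by
      have : ((A:ℝ) : EReal) ≤ (((1 - d/(d+r)) * c + (d/(d+r)) * M : ℝ) : EReal) := by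
        rw [EReal.coe_add, EReal.coe_mul, EReal.coe_mul]
        exact hkey
      exact_mod_cast this
    set s : ℝ := d / (d+r) with hs
    have hs0 : 0 ≤ s := by positivity
    have hs1 : s ≤ 1 := by rw [hs, div_le_one hdr]; linarith
    have hβ : r / (D + r) ≤ 1 - s := by
      rw [hs]
      have h1 : 1 - d/(d+r) = r/(d+r) := by field_simp; ring
      rw [h1]
      apply div_le_div_of_nonneg_left hr.le hdr
      · linarith
    by_contra hcon
    push_neg at hcon
    have hcL : c < L := by exact_mod_cast hcon
    have hc0 : c < 0 := lt_of_lt_of_le hcL (min_le_left _ _)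
    have hstep : (1 - s) * c ≤ (r / (D+r)) * c :=
      mul_le_mul_of_nonpos_right hβ hc0.le
    have hsM : s * M ≤ |M| := by
      calc s * M ≤ s * |M| := mul_le_mul_of_nonneg_left (le_abs_self M) hs0
        _ ≤ 1 * |M| := mul_le_mul_of_nonneg_right hs1 (abs_nonneg M)
        _ = |M| := one_mul _
    have h2 : A - |M| ≤ (r / (D+r)) * c := by linarith
    have hDr : (0:ℝ) < D + r := by linarith
    have h3 : ((A - |M|) * (D + r)) / r ≤ c := by
      rw [div_le_iff₀ hr]
      rw [div_mul_eq_mul_div, le_div_iff₀ hDr] at h2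
      linarith
    have : L ≤ c := le_trans (min_le_right _ _) h3
    linarith
lemma eventual_lower_bound_on_compact {K : Set (EuclideanSpace ℝ (Fin n))}
    (hKconv : Convex ℝ K)
    {f : ℕ → EuclideanSpace ℝ (Fin n) → EReal} {flim : EuclideanSpace ℝ (Fin n) → EReal}
    (hnotbot : ∀ j, ∀ x ∈ K, f j x ≠ ⊥)
    (hconv : ∀ j, ERealConvexOn K (f j)) (hlimconv : ERealConvexOn K flim)
    (hlimnotbot : ∀ x ∈ K, flim x ≠ ⊥) (hlimfin : ∀ x ∈ interior K, flim x ≠ ⊤)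
    (hptwise : ∀ x ∈ interior K, Filter.Tendsto (fun j => f j x) Filter.atTop (𝓝 (flim x)))
    {mR : ℝ} (hm : ∀ z ∈ K, (mR : EReal) ≤ flim z)
    {C : Set (EuclideanSpace ℝ (Fin n))} (hC : IsCompact C) (hCint : C ⊆ interior K)
    {ε : ℝ} (hε : 0 < ε) :
    ∀ᶠ j in Filter.atTop, ∀ z ∈ C, ((mR - ε : ℝ) : EReal) ≤ f j z := by
  classical
  have hchoice : ∀ p : EuclideanSpace ℝ (Fin n), ∃ r M : ℝ, 0 < r ∧
      (p ∈ interior K → (Metric.closedBall p (2*r) ⊆ interior K ∧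
        (∀ z ∈ Metric.closedBall p (2*r), flim z ≤ (M:EReal)) ∧
        (∀ᶠ j in Filter.atTop, ∀ z ∈ Metric.closedBall p (2*r), f j z ≤ (M:EReal)))) := by
    intro p
    by_cases hp : p ∈ interior K
    · obtain ⟨r, hr, M, h1, h2, h3⟩ := eventual_ball_bound hKconv hconv hlimconv
        hlimnotbot hlimfin hptwise hp
      exact ⟨r, M, hr, fun _ => ⟨h1, h2, h3⟩⟩
    · exact ⟨1, 0, one_pos, fun h => absurd h hp⟩
  choose r M hr hprop using hchoice
  set ρ : EuclideanSpace ℝ (Fin n) → ℝ := fun p =>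
    min (r p) (r p * (ε/2) / (|M p - mR| + ε + 1)) with hρ
  have hρpos : ∀ p, 0 < ρ p := by
    intro p
    apply lt_min (hr p)
    have h0 : (0:ℝ) < |M p - mR| + ε + 1 := by positivity
    exact div_pos (mul_pos (hr p) (by linarith)) h0
  obtain ⟨F, hF, hcover⟩ := hC.elim_nhds_subcover (fun p => Metric.ball p (ρ p))
    (fun p _ => Metric.ball_mem_nhds _ (hρpos p))
  have hev : ∀ᶠ j in Filter.atTop, ∀ p ∈ F,
      ((∀ z ∈ Metric.closedBall p (2*(r p)), f j z ≤ (M p : EReal)) ∧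
        ((mR - ε/2 : ℝ) : EReal) < f j p) := by
    rw [Filter.eventually_all_finset]
    intro p hpF
    have hpint : p ∈ interior K := hCint (hF p hpF)
    have h1 := (hprop p hpint).2.2
    have h2 : ((mR - ε/2 : ℝ) : EReal) < flim p := by
      refine lt_of_lt_of_le ?_ (hm p (interior_subset hpint))
      exact_mod_cast (by linarith : mR - ε/2 < mR)
    exact h1.and ((hptwise p hpint).eventually_const_lt h2)
  refine hev.mono fun j hj z hz => ?_
  obtain ⟨p, hpF, hzp⟩ := Set.mem_iUnion₂.1 (hcover hz)
  have hpint : p ∈ interior K := hCint (hF p hpF)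
  have hzK : z ∈ K := interior_subset (hCint hz)
  obtain ⟨hjball, hjp⟩ := hj p hpF
  have hzball : z ∈ Metric.closedBall p (r p) := by
    have : dist z p < ρ p := hzp
    exact Metric.mem_closedBall.2 (le_trans this.le (min_le_left _ _))
  have hkey := key_est (hconv j) (hnotbot j) (hr p)
    ((hprop p hpint).1.trans interior_subset) hjball
    (Metric.mem_closedBall_self (hr p).le) hzK
  by_cases hft : f j z = ⊤
  · rw [hft]; exact le_top
  · have hfz : f j z = ((f j z).toReal : EReal) :=
      (EReal.coe_toReal hft (hnotbot j z hzK)).symm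
    set c : ℝ := (f j z).toReal with hc
    rw [hfz] at hkey ⊢
    set d : ℝ := dist p z with hd
    have hd0 : 0 ≤ d := dist_nonneg
    have hdρ : d < ρ p := by rw [hd, dist_comm]; exact hzp
    have hdr : 0 < d + r p := by have := hr p; linarith
    set s : ℝ := d / (d + r p) with hs
    have hs0 : 0 ≤ s := by positivity
    have hs1 : 1 - s ≥ 0 := by
      rw [hs]
      have : d / (d + r p) ≤ 1 := by rw [div_le_one hdr]; linarith [hr p]
      linarith
    have hsle : s ≤ (ε/2) / (|M p - mR| + ε + 1) := by
      have h1 : s ≤ d / r p := div_le_div_of_nonneg_left hd0 (hr p) (by linarith [hr p])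
      have h2 : d / r p ≤ ρ p / r p := by
        exact div_le_div_of_nonneg_right hdρ.le (hr p).le
      have h3 : ρ p / r p ≤ (ε/2) / (|M p - mR| + ε + 1) := by
        rw [hρ]
        have hmin : min (r p) (r p * (ε/2) / (|M p - mR| + ε + 1)) ≤
            r p * (ε/2) / (|M p - mR| + ε + 1) := min_le_right _ _
        calc min (r p) (r p * (ε/2) / (|M p - mR| + ε + 1)) / r p
            ≤ (r p * (ε/2) / (|M p - mR| + ε + 1)) / r p := by
              exact div_le_div_of_nonneg_right hmin (hr p).le
          _ = (ε/2) / (|M p - mR| + ε + 1) := by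
              have hrne : r p ≠ 0 := (hr p).ne'
              have hXne : |M p - mR| + ε + 1 ≠ 0 := by positivity
              field_simp
      linarith
    -- real inequality
    have hreal : mR - ε/2 < (1 - s) * c + s * (M p) := by
      have := lt_of_lt_of_le hjp hkey
      rw [show ((1 - s : ℝ) : EReal) * ((c:ℝ):EReal) + ((s:ℝ):EReal) * ((M p : ℝ):EReal)
          = (((1 - s) * c + s * (M p) : ℝ) : EReal) by
        rw [EReal.coe_add, EReal.coe_mul, EReal.coe_mul]] at this
      exact_mod_cast this
    -- conclude
    have habs : M p - mR ≤ |M p - mR| := le_abs_self _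
    have habs0 : 0 ≤ |M p - mR| := abs_nonneg _
    have hsM : s * (M p - mR + ε) ≤ ε/2 := by
      rcases le_or_gt (M p - mR + ε) 0 with hneg | hpos
      · have : s * (M p - mR + ε) ≤ 0 := mul_nonpos_of_nonneg_of_nonpos hs0 hneg
        linarith
      · calc s * (M p - mR + ε) ≤ ((ε/2) / (|M p - mR| + ε + 1)) * (M p - mR + ε) :=
            mul_le_mul_of_nonneg_right hsle hpos.le
          _ ≤ ε/2 := by
            rw [div_mul_eq_mul_div, div_le_iff₀ (by positivity)]
            nlinarith
    show ((mR - ε : ℝ) : EReal) ≤ ((c : ℝ) : EReal)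
    by_contra hcon
    push_neg at hcon
    have hclt : c < mR - ε := by exact_mod_cast hcon
    have : (1 - s) * c ≤ (1 - s) * (mR - ε) := mul_le_mul_of_nonneg_left hclt.le hs1
    nlinarith
set_option maxHeartbeats 2000000 in
/-- Convergence of infima and of minimizers for a pointwise convergent
sequence of lower semicontinuous convex functions with values in `ℝ ∪ {∞}` on a
convex body `K`. -/
theorem convergence_of_minima {n : ℕ}
    (K : Set (EuclideanSpace ℝ (Fin n)))
    (hKcpt : IsCompact K) (hKconv : Convex ℝ K) (hKint : (interior K).Nonempty)
    (f : ℕ → EuclideanSpace ℝ (Fin n) → EReal)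
    (flim : EuclideanSpace ℝ (Fin n) → EReal)
    (hnotbot : ∀ j, ∀ x ∈ K, f j x ≠ ⊥)
    (hlimnotbot : ∀ x ∈ K, flim x ≠ ⊥)
    (hconv : ∀ j, ERealConvexOn K (f j))
    (hlsc : ∀ j, LowerSemicontinuousOn (f j) K)
    (hlimconv : ERealConvexOn K flim)
    (hlimlsc : LowerSemicontinuousOn flim K)
    (hlimfin : ∀ x ∈ interior K, flim x ≠ ⊤)
    (hptwise : ∀ x ∈ interior K, Tendsto (fun j => f j x) atTop (𝓝 (flim x))) :
    Tendsto (fun j => sInf (f j '' K)) atTop (𝓝 (sInf (flim '' K))) ∧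
      ∀ xs : ℕ → EuclideanSpace ℝ (Fin n),
        (∀ j, xs j ∈ K ∧ ∀ y ∈ K, f j (xs j) ≤ f j y) →
        ∀ x, MapClusterPt x atTop xs → ∀ y ∈ K, flim x ≤ flim y := by
  classical
  obtain ⟨x₀, hx₀⟩ := hKint
  have hx₀K : x₀ ∈ K := interior_subset hx₀
  have hA : flim x₀ = ((flim x₀).toReal : EReal) :=
    (EReal.coe_toReal (hlimfin _ hx₀) (hlimnotbot _ hx₀K)).symm
  set A : ℝ := (flim x₀).toReal with hAdef
  obtain ⟨r₀, hr₀, M₀, hball₀, hflimM₀, -⟩ := eventual_ball_bound hKconv hconv hlimconv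
    hlimnotbot hlimfin hptwise hx₀
  obtain ⟨L, hL⟩ := flim_global_lower_bound hKcpt hlimconv hlimnotbot hx₀ hr₀
    (hball₀.trans interior_subset) hflimM₀
  set m : EReal := sInf (flim '' K) with hmdef
  have hmle : ∀ y ∈ K, m ≤ flim y := fun y hy => sInf_le ⟨y, hy, rfl⟩
  have hmlb : (L : EReal) ≤ m := le_sInf (by rintro _ ⟨y, hy, rfl⟩; exact hL y hy)
  have hmub : m ≤ (A : EReal) := hA ▸ hmle x₀ hx₀K
  have hmbot : m ≠ ⊥ := fun h => by
    rw [h] at hmlb; exact (EReal.bot_lt_coe L).not_ge hmlb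
  have hmtop : m ≠ ⊤ := fun h => by
    rw [h] at hmub; exact (EReal.coe_lt_top A).not_ge hmub
  have hmR : m = ((m.toReal : ℝ) : EReal) := (EReal.coe_toReal hmtop hmbot).symm
  set mR : ℝ := m.toReal with hmRdef
  have hmRle : ∀ z ∈ K, (mR : EReal) ≤ flim z := fun z hz => hmR ▸ hmle z hz
  -- Claim D : eventual uniform lower bound on all of K
  have hlower : ∀ ε : ℝ, 0 < ε → ∀ᶠ j in atTop, ∀ y ∈ K, ((mR - ε : ℝ) : EReal) ≤ f j y := by
    intro ε hε
    set B : ℝ := |mR| + |A| + ε + 1 with hBdef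
    have hB : 0 < B := by positivity
    set t : ℝ := max (1/2) (1 - (ε/8)/B) with htdef
    have ht1 : t < 1 := by
      apply max_lt (by norm_num)
      have : 0 < (ε/8)/B := by positivity
      linarith
    have ht2 : 1/2 ≤ t := le_max_left _ _
    have ht0 : 0 < t := by linarith
    have ht1' : 0 < 1 - t := by linarith
    have htB : (1-t) * B ≤ ε/8 := by
      have h2 : 1 - t ≤ (ε/8)/B := by
        have := le_max_right (1/2 : ℝ) (1 - (ε/8)/B)
        rw [← htdef] at this
        linarith
      calc (1-t)*B ≤ ((ε/8)/B)*B := mul_le_mul_of_nonneg_right h2 hB.le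
        _ = ε/8 := by field_simp
    set ε' : ℝ := t * ε / 2 with hε'def
    have hε'pos : 0 < ε' := by positivity
    have hε'le : ε' ≤ ε := by nlinarith
    set C : Set (EuclideanSpace ℝ (Fin n)) := (fun y => (1-t) • x₀ + t • y) '' K with hCdef
    have hCcpt : IsCompact C := hKcpt.image (by fun_prop)
    have hCint : C ⊆ interior K := by
      rintro _ ⟨y, hy, rfl⟩
      exact hKconv.combo_interior_self_mem_interior hx₀ hy ht1' ht0.le (by ring)
    have hD0 := eventual_lower_bound_on_compact hKconv hnotbot hconv hlimconv hlimnotbot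
      hlimfin hptwise hmRle hCcpt hCint hε'pos
    have hx0ev : ∀ᶠ j in atTop, f j x₀ < ((A + ε' : ℝ) : EReal) := by
      refine (hptwise x₀ hx₀).eventually_lt_const ?_
      rw [hA]
      exact_mod_cast (by linarith : A < A + ε')
    refine (hD0.and hx0ev).mono fun j ⟨hjC, hjx₀⟩ y hy => ?_
    by_cases hft : f j y = ⊤
    · rw [hft]; exact le_top
    · have hfy : f j y = ((f j y).toReal : EReal) :=
        (EReal.coe_toReal hft (hnotbot j y hy)).symm
      set b : ℝ := (f j y).toReal with hbdef
      rw [hfy]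
      have hzC : (1-t) • x₀ + t • y ∈ C := ⟨y, hy, rfl⟩
      have hconvj := hconv j x₀ hx₀K y hy (1-t) t ht1'.le ht0.le (by ring)
      have hlow := hjC _ hzC
      have hup : ((1-t:ℝ) : EReal) * f j x₀ + (t : EReal) * f j y
          ≤ (((1-t)*(A+ε') + t*b : ℝ) : EReal) := by
        rw [EReal.coe_add, EReal.coe_mul, EReal.coe_mul]
        refine add_le_add ?_ ?_
        · exact mul_le_mul_of_nonneg_left hjx₀.le (by exact_mod_cast ht1'.le)
        · rw [hfy]
      have hreal : mR - ε' ≤ (1-t)*(A+ε') + t*b := by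
        exact_mod_cast (hlow.trans hconvj).trans hup
      have hkey : t*(mR - ε) ≤ mR - ε' - (1-t)*(A+ε') := by
        nlinarith [mul_le_mul_of_nonneg_left (le_abs_self A) ht1'.le,
          mul_le_mul_of_nonneg_left (neg_abs_le A) ht1'.le,
          mul_le_mul_of_nonneg_left (le_abs_self mR) ht1'.le,
          mul_le_mul_of_nonneg_left (neg_abs_le mR) ht1'.le,
          mul_le_mul_of_nonneg_left hε'le ht1'.le]
      have hb : t * (mR - ε) ≤ t * b := by linarith
      have : mR - ε ≤ b := le_of_mul_le_mul_left hb ht0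
      exact_mod_cast this
  -- limsup direction
  have hupper : ∀ b : EReal, m < b → ∀ᶠ j in atTop, sInf (f j '' K) < b := by
    intro b hb
    obtain ⟨v, hvmem, hvb⟩ := sInf_lt_iff.1 hb
    obtain ⟨y, hy, rfl⟩ := hvmem
    have hytop : flim y ≠ ⊤ := (lt_of_lt_of_le hvb le_top).ne
    have hyreal : flim y = ((flim y).toReal : EReal) :=
      (EReal.coe_toReal hytop (hlimnotbot y hy)).symm
    set cy : ℝ := (flim y).toReal with hcydef
    have hex : ∃ t' : ℝ, 0 < t' ∧ t' < 1 ∧ (((1-t')*A + t'*cy : ℝ) : EReal) < b := by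
      by_cases hbt : b = ⊤
      · exact ⟨1/2, by norm_num, by norm_num, hbt ▸ EReal.coe_lt_top _⟩
      · have hbbot : b ≠ ⊥ := fun h => by
          rw [h] at hvb; exact (not_lt_bot hvb)
        have hbeq : b = ((b.toReal : ℝ) : EReal) := (EReal.coe_toReal hbt hbbot).symm
        set bR : ℝ := b.toReal with hbRdef
        have hcyb : cy < bR := by
          rw [hbeq, hyreal] at hvb; exact_mod_cast hvb
        set t' : ℝ := max (1/2) (1 - (bR - cy)/(2*(|A - cy|+1))) with ht'def
        have hpos : 0 < (bR - cy)/(2*(|A - cy|+1)) := by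
          apply div_pos (by linarith) (by positivity)
        have ht'1 : t' < 1 := max_lt (by norm_num) (by linarith)
        have ht'0 : 0 < t' := lt_of_lt_of_le (by norm_num) (le_max_left _ _)
        have ht'ub : 1 - t' ≤ (bR - cy)/(2*(|A - cy|+1)) := by
          have := le_max_right (1/2 : ℝ) (1 - (bR - cy)/(2*(|A - cy|+1)))
          rw [← ht'def] at this
          linarith
        refine ⟨t', ht'0, ht'1, ?_⟩
        rw [hbeq]
        have harith : (1-t')*A + t'*cy < bR := by
          have h1 : (1-t')*A + t'*cy = cy + (1-t')*(A - cy) := by ring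
          have h2 : (1-t')*(A - cy) ≤ (1-t')*|A - cy| :=
            mul_le_mul_of_nonneg_left (le_abs_self _) (by linarith)
          have h3 : (1-t')*|A - cy| ≤ ((bR - cy)/(2*(|A - cy|+1)))*|A-cy| :=
            mul_le_mul_of_nonneg_right ht'ub (abs_nonneg _)
          have h4 : ((bR - cy)/(2*(|A - cy|+1)))*|A-cy| ≤ (bR - cy)/2 := by
            rw [div_mul_eq_mul_div, div_le_div_iff₀ (by positivity) (by norm_num)]
            nlinarith [abs_nonneg (A - cy)]
          linarith
        exact_mod_cast harith
    obtain ⟨t', ht'0, ht'1, htgt⟩ := hex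
    set z : EuclideanSpace ℝ (Fin n) := (1-t') • x₀ + t' • y with hzdef
    have hzint : z ∈ interior K :=
      hKconv.combo_interior_self_mem_interior hx₀ hy (by linarith) ht'0.le (by ring)
    have hflimz : flim z ≤ (((1-t')*A + t'*cy : ℝ) : EReal) := by
      have := hlimconv x₀ hx₀K y hy (1-t') t' (by linarith) ht'0.le (by ring)
      refine this.trans ?_
      rw [hA, hyreal, EReal.coe_add, EReal.coe_mul, EReal.coe_mul]
    have hev := (hptwise z hzint).eventually_lt_const (lt_of_le_of_lt hflimz htgt)
    refine hev.mono fun j hj => ?_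
    exact lt_of_le_of_lt (sInf_le ⟨z, interior_subset hzint, rfl⟩) hj
  -- Part 1: convergence of infima
  have htendsto : Tendsto (fun j => sInf (f j '' K)) atTop (𝓝 m) := by
    rw [tendsto_order]
    constructor
    · intro a ha
      obtain ⟨c', hac', hc'm⟩ := exists_between ha
      have hc'bot : c' ≠ ⊥ := fun h => by rw [h] at hac'; exact not_lt_bot hac'
      have hc'top : c' ≠ ⊤ := (lt_of_lt_of_le hc'm (hmub.trans le_top)).ne
      have hc'eq : ((c'.toReal : ℝ) : EReal) = c' := EReal.coe_toReal hc'top hc'bot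
      set cR : ℝ := c'.toReal with hcRdef
      have hcRm : cR < mR := by
        rw [← hc'eq, hmR] at hc'm; exact_mod_cast hc'm
      have hεpos : 0 < mR - cR := by linarith
      refine (hlower (mR - cR) hεpos).mono fun j hj => ?_
      have h1 : ((cR : ℝ) : EReal) ≤ sInf (f j '' K) := by
        refine le_sInf ?_
        rintro _ ⟨y, hy, rfl⟩
        have := hj y hy
        rwa [show mR - (mR - cR) = cR by ring] at this
      exact lt_of_lt_of_le (hc'eq ▸ hac') h1
    · exact hupper
  refine ⟨hmdef ▸ htendsto, ?_⟩
  intro xs hxs x hx y hy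
  -- x belongs to K
  have hxK : x ∈ K := by
    rw [← hKcpt.isClosed.closure_eq, mem_closure_iff_nhds]
    intro U hU
    obtain ⟨j, hj⟩ := ((mapClusterPt_iff_frequently.1 hx) U hU).exists
    exact ⟨xs j, hj, (hxs j).1⟩
  suffices hxm : flim x ≤ m by exact hxm.trans (hmle y hy)
  by_contra hcon
  push_neg at hcon
  obtain ⟨c', hmc', hc'x⟩ := exists_between hcon
  have hc'top : c' ≠ ⊤ := (lt_of_lt_of_le hc'x le_top).ne
  have hc'bot : c' ≠ ⊥ := fun h => by rw [h] at hmc'; exact not_lt_bot hmc'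
  have hc'eq : ((c'.toReal : ℝ) : EReal) = c' := EReal.coe_toReal hc'top hc'bot
  set cR : ℝ := c'.toReal with hcRdef
  have hmRcR : mR < cR := by
    rw [← hc'eq, hmR] at hmc'; exact_mod_cast hmc'
  -- lower semicontinuity at x
  have hlsc_x : ∀ᶠ z in 𝓝[K] x, ((cR : ℝ) : EReal) < flim z :=
    hlimlsc x hxK (cR : EReal) (hc'eq ▸ hc'x)
  obtain ⟨δ, hδ0, hδsub⟩ := Metric.mem_nhdsWithin_iff.1 hlsc_x
  -- choose t
  set γ : ℝ := min (δ/(‖x₀ - x‖+1)) ((cR - mR)/(|A - mR|+1)) with hγdef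
  have hγ0 : 0 < γ := lt_min (by positivity) (by
    apply div_pos (by linarith) (by positivity))
  set t : ℝ := 1 - (min γ 1)/2 with htdef
  have hmin0 : 0 < min γ 1 := lt_min hγ0 one_pos
  have hmin1 : min γ 1 ≤ 1 := min_le_right _ _
  have ht1 : t < 1 := by rw [htdef]; linarith
  have ht0 : 0 < t := by rw [htdef]; linarith
  have h1t : 0 < 1 - t := by rw [htdef]; linarith
  have h1tγ : 1 - t < γ := by
    rw [htdef]
    have : (min γ 1) ≤ γ := min_le_left _ _
    linarith
  set wt : EuclideanSpace ℝ (Fin n) := (1-t) • x₀ + t • x with hwtdef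
  have hwtint : wt ∈ interior K :=
    hKconv.combo_interior_self_mem_interior hx₀ hxK h1t ht0.le (by ring)
  have hwtball : wt ∈ Metric.ball x δ := by
    have hsub : wt - x = (1-t) • (x₀ - x) := by
      rw [hwtdef]; module
    have hnorm : dist wt x = (1-t) * ‖x₀ - x‖ := by
      rw [dist_eq_norm, hsub, norm_smul, Real.norm_eq_abs, abs_of_pos h1t]
    rw [Metric.mem_ball, hnorm]
    have hγδ : γ ≤ δ/(‖x₀ - x‖+1) := min_le_left _ _
    have h2 : (1-t) * ‖x₀ - x‖ < γ * (‖x₀ - x‖+1) := by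
      calc (1-t) * ‖x₀ - x‖ ≤ γ * ‖x₀ - x‖ :=
            mul_le_mul_of_nonneg_right h1tγ.le (norm_nonneg _)
        _ < γ * (‖x₀ - x‖+1) := by nlinarith [norm_nonneg (x₀ - x), hγ0]
    calc (1-t) * ‖x₀ - x‖ < γ * (‖x₀ - x‖+1) := h2
      _ ≤ (δ/(‖x₀ - x‖+1)) * (‖x₀ - x‖+1) :=
          mul_le_mul_of_nonneg_right hγδ (by positivity)
      _ = δ := by field_simp
  have hflimwt_lb : ((cR : ℝ) : EReal) < flim wt := hδsub ⟨hwtball, interior_subset hwtint⟩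
  -- Claim E : flim wt ≤ (1-t) A + t mR
  set T : ℝ := (1-t)*A + t*mR with hTdef
  have hclaimE : flim wt ≤ ((T : ℝ) : EReal) := by
    obtain ⟨r, hr, M, hballwt, hMflim, hMev⟩ := eventual_ball_bound hKconv hconv hlimconv
      hlimnotbot hlimfin hptwise hwtint
    -- reduce to: ∀ real q > T, flim wt ≤ q
    have hq : ∀ q : ℝ, T < q → flim wt ≤ ((q : ℝ) : EReal) := by
      intro q hTq
      set ε : ℝ := (q - T)/3 with hεdef
      have hεpos : 0 < ε := by rw [hεdef]; linarith
      set Q : ℝ := (1-t)*(A+ε) + t*(mR+ε) with hQdef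
      have hQT : Q = T + ε := by rw [hQdef, hTdef]; ring
      set η : ℝ := min r (r * ε/(|M - Q|+1)) with hηdef
      have hη0 : 0 < η := lt_min hr (div_pos (mul_pos hr hεpos) (by positivity))
      by_contra hcontra
      push_neg at hcontra
      have hev0 : ∀ᶠ j in atTop, ((q:ℝ) : EReal) < f j wt :=
        (hptwise wt hwtint).eventually_const_lt hcontra
      have hev1 : ∀ᶠ j in atTop, f j x₀ < ((A + ε : ℝ) : EReal) := by
        refine (hptwise x₀ hx₀).eventually_lt_const ?_
        rw [hA]
        exact_mod_cast (by linarith : A < A + ε)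
      have hev2 : ∀ᶠ j in atTop, sInf (f j '' K) < ((mR + ε : ℝ) : EReal) := by
        refine htendsto.eventually_lt_const ?_
        rw [hmR]
        exact_mod_cast (by linarith : mR < mR + ε)
      have hfreq : ∃ᶠ j in atTop, xs j ∈ Metric.ball x η :=
        (mapClusterPt_iff_frequently.1 hx) _ (Metric.ball_mem_nhds _ hη0)
      obtain ⟨j, ⟨hj0, hj1, hj2, hj3⟩, hj4⟩ :=
        ((hev0.and (hev1.and (hev2.and hMev))).and_frequently hfreq).exists
      -- derive the contradictory upper bound on f j wt
      set wj : EuclideanSpace ℝ (Fin n) := (1-t) • x₀ + t • (xs j) with hwjdef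
      have hwjK : wj ∈ K := hKconv hx₀K (hxs j).1 h1t.le ht0.le (by ring)
      have hdist : dist wt wj = t * dist x (xs j) := by
        rw [dist_eq_norm, dist_eq_norm]
        have hsub : wt - wj = t • (x - xs j) := by
          rw [hwtdef, hwjdef]; module
        rw [hsub, norm_smul, Real.norm_eq_abs, abs_of_pos ht0]
      have hdη : dist wt wj ≤ η := by
        rw [hdist]
        have h1 : dist x (xs j) < η := by rw [dist_comm]; exact hj4
        nlinarith [dist_nonneg (x := x) (y := xs j)]
      have hwjball : wj ∈ Metric.closedBall wt r := by
        rw [Metric.mem_closedBall, dist_comm]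
        exact hdη.trans (min_le_left _ _)
      have hfxsj : f j (xs j) ≤ sInf (f j '' K) := by
        refine le_sInf ?_
        rintro _ ⟨y', hy', rfl⟩
        exact (hxs j).2 y' hy'
      have hfwj : f j wj ≤ ((Q : ℝ) : EReal) := by
        have hconvj := hconv j x₀ hx₀K (xs j) (hxs j).1 (1-t) t h1t.le ht0.le (by ring)
        refine hconvj.trans ?_
        rw [hQdef, EReal.coe_add, EReal.coe_mul, EReal.coe_mul]
        refine add_le_add ?_ ?_
        · exact mul_le_mul_of_nonneg_left hj1.le (by exact_mod_cast h1t.le)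
        · exact mul_le_mul_of_nonneg_left (hfxsj.trans hj2.le) (by exact_mod_cast ht0.le)
      have hkey := key_est (hconv j) (hnotbot j) hr (hballwt.trans interior_subset) hj3
        (Metric.mem_closedBall_self hr.le) hwjK
      set d : ℝ := dist wt wj with hddef
      have hd0 : 0 ≤ d := dist_nonneg
      have hdr : 0 < d + r := by linarith
      set s : ℝ := d / (d + r) with hsdef
      have hs0 : 0 ≤ s := by positivity
      have hs1 : s ≤ 1 := by rw [hsdef, div_le_one hdr]; linarith
      have hsle : s ≤ ε/(|M - Q|+1) := by
        have h1 : s ≤ d / r := div_le_div_of_nonneg_left hd0 hr (by linarith)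
        have h2 : d / r ≤ η / r := div_le_div_of_nonneg_right hdη hr.le
        have h3 : η / r ≤ ε/(|M - Q|+1) := by
          rw [hηdef]
          have hrne : r ≠ 0 := hr.ne'
          have hXne : |M - Q| + 1 ≠ 0 := by positivity
          calc min r (r * ε/(|M - Q|+1)) / r ≤ (r * ε/(|M - Q|+1)) / r :=
              div_le_div_of_nonneg_right (min_le_right _ _) hr.le
            _ = ε/(|M - Q|+1) := by field_simp
        linarith
      have hfwt : f j wt ≤ (((1-s)*Q + s*M : ℝ) : EReal) := by
        refine hkey.trans ?_
        rw [EReal.coe_add, EReal.coe_mul, EReal.coe_mul]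
        refine add_le_add ?_ le_rfl
        exact mul_le_mul_of_nonneg_left hfwj (by exact_mod_cast (by linarith : (0:ℝ) ≤ 1 - s))
      have harith : (1-s)*Q + s*M ≤ q := by
        have habs1 : M - Q ≤ |M - Q| := le_abs_self _
        have habs0 : 0 ≤ |M - Q| := abs_nonneg _
        have hsMQ : s * (M - Q) ≤ ε := by
          rcases le_or_gt (M - Q) 0 with hneg | hpos
          · have : s * (M - Q) ≤ 0 := mul_nonpos_of_nonneg_of_nonpos hs0 hneg
            linarith
          · calc s * (M - Q) ≤ (ε/(|M - Q|+1)) * (M - Q) :=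
                mul_le_mul_of_nonneg_right hsle hpos.le
              _ ≤ ε := by
                rw [div_mul_eq_mul_div, div_le_iff₀ (by positivity)]
                nlinarith
        have hrw : (1-s)*Q + s*M = Q + s*(M - Q) := by ring
        rw [hrw]
        have h5 : Q + s*(M - Q) ≤ Q + ε := by linarith
        have h6 : Q + ε ≤ q := by rw [hQT, hεdef]; linarith
        linarith
      have : f j wt ≤ ((q : ℝ) : EReal) :=
        hfwt.trans (by exact_mod_cast harith)
      exact absurd this (not_le.2 hj0)
    by_contra hc
    push_neg at hc
    obtain ⟨q', hq1, hq2⟩ := exists_between hc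
    have hq'top : q' ≠ ⊤ := (lt_of_lt_of_le hq2 le_top).ne
    have hq'bot : q' ≠ ⊥ := fun h => by rw [h] at hq1; exact not_lt_bot hq1
    have hq'eq : ((q'.toReal : ℝ) : EReal) = q' := EReal.coe_toReal hq'top hq'bot
    have hTq : T < q'.toReal := by
      rw [← hq'eq] at hq1; exact_mod_cast hq1
    exact absurd (hq q'.toReal hTq) (not_le.2 (hq'eq ▸ hq2))
  -- final contradiction
  have harithT : T < cR := by
    rw [hTdef]
    have h1 : (1-t)*A + t*mR = mR + (1-t)*(A - mR) := by ring
    have hγ2 : γ ≤ (cR - mR)/(|A - mR|+1) := min_le_right _ _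
    have h2 : (1-t)*(A - mR) ≤ (1-t)*|A - mR| :=
      mul_le_mul_of_nonneg_left (le_abs_self _) h1t.le
    have h3 : (1-t)*|A - mR| < γ * (|A - mR|+1) := by
      nlinarith [abs_nonneg (A - mR)]
    have h4 : γ * (|A - mR|+1) ≤ (cR - mR)/(|A - mR|+1) * (|A - mR|+1) :=
      mul_le_mul_of_nonneg_right hγ2 (by positivity)
    have h5 : (cR - mR)/(|A - mR|+1) * (|A - mR|+1) = cR - mR := by field_simp
    linarith
  have : ((cR : ℝ) : EReal) < ((T : ℝ) : EReal) := lt_of_lt_of_le hflimwt_lb hclaimE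
  have : cR < T := by exact_mod_cast this
  linarith
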